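/- Let T be the set of transpositions (i,j) with 0 ≤ i < j ≤ m, and H the set of 3-cycles (0,i,j) with 0 < i < j ≤ m, acting on {0,1,…,m}. For each permutation σ define the (m+1)×(m+1) matrix ĝ_σ := W_σ − W_id, where W_σ(x|x') = δ_{x,σ(x')}. Then the family {ĝ_σ : σ ∈ T ∪ H} of m² matrices is linearly independent in the space B of matrices with all row sums and all column sums equal to zero, and hence spans B. -/

import Mathlib

open Matrix

/-- `σ` is a transposition `(i j)` with `i < j`, or a 3-cycle `(0 i j)` with
`0 < i < j`, i.e. `σ ∈ T ∪ H`. -/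
def InTH {m : ℕ} (σ : Equiv.Perm (Fin (m + 1))) : Prop :=
  (∃ i j : Fin (m + 1), i < j ∧ σ = Equiv.swap i j) ∨
  (∃ i j : Fin (m + 1), 0 < i ∧ i < j ∧ σ = Equiv.swap 0 j * Equiv.swap 0 i)

/-- The matrix `ĝ_σ = W_σ - W_id`, where `W_σ(x|x') = δ_{x,σ(x')}`. -/
def permDiff {m : ℕ} (σ : Equiv.Perm (Fin (m + 1))) : Matrix (Fin (m + 1)) (Fin (m + 1)) ℝ :=
  Matrix.of fun x x' => (if x = σ x' then (1 : ℝ) else 0) - (if x = x' then (1 : ℝ) else 0)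

namespace PDAux
open Finset
variable {m : ℕ}

abbrev sw (i j : Fin (m+1)) : Equiv.Perm (Fin (m+1)) := Equiv.swap i j
abbrev cy (i j : Fin (m+1)) : Equiv.Perm (Fin (m+1)) := Equiv.swap 0 j * Equiv.swap 0 i

lemma cy_apply {i j : Fin (m+1)} (h0 : 0 < i) (hij : i < j) (z : Fin (m+1)) :
    cy i j z = if z = 0 then i else if z = i then j else if z = j then 0 else z := by
  have hi0 : i ≠ 0 := h0.ne'
  have hj0 : j ≠ 0 := (h0.trans hij).ne'
  have hij' : i ≠ j := hij.ne
  simp only [cy, Equiv.Perm.mul_apply, Equiv.swap_apply_def]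
  split_ifs <;> simp_all

lemma sw_eq_iff {i j x y : Fin (m+1)} (hxy : x ≠ y) :
    x = sw i j y ↔ (i = x ∧ j = y) ∨ (i = y ∧ j = x) := by
  rw [Equiv.swap_apply_def]
  split_ifs with h1 h2 <;> constructor <;> rintro h <;> try (first | tauto | simp_all)
  rcases h with ⟨rfl,rfl⟩|⟨rfl,rfl⟩ <;> simp_all

lemma cy_eq_iff {i j x y : Fin (m+1)} (h0 : 0 < i) (hij : i < j) (hxy : x ≠ y) :
    x = cy i j y ↔ (y = 0 ∧ x = i) ∨ (y = i ∧ x = j) ∨ (y = j ∧ x = 0) := by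
  rw [cy_apply h0 hij]
  split_ifs with h1 h2 h3 <;> constructor <;> rintro h <;> try (first | tauto | simp_all)
  all_goals rcases h with h | ⟨h, h'⟩ <;>
    first | exact h | exact absurd h hij.ne | exact absurd h.symm h0.ne'

lemma sw_ne_cy {i j a b : Fin (m+1)} (h0 : 0 < a) (hab : a < b) : sw i j ≠ cy a b := by
  intro h
  have h2 : sw i j (sw i j 0) = cy a b (cy a b 0) := by rw [h]
  rw [Equiv.swap_apply_self] at h2
  rw [cy_apply h0 hab 0, if_pos rfl, cy_apply h0 hab a, if_neg h0.ne', if_pos rfl] at h2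
  exact (h0.trans hab).ne' h2.symm

lemma pd_row (σ : Equiv.Perm (Fin (m+1))) (x : Fin (m+1)) : ∑ y, permDiff σ x y = 0 := by
  simp only [permDiff, Matrix.of_apply, Finset.sum_sub_distrib]
  rw [Equiv.sum_comp σ (fun y => if x = y then (1:ℝ) else 0)]
  exact sub_self _

lemma pd_offdiag {σ : Equiv.Perm (Fin (m+1))} {x y : Fin (m+1)} (hxy : x ≠ y) :
    permDiff σ x y = if x = σ y then 1 else 0 := by
  simp [permDiff, hxy]


theorem indep (m : ℕ) :
    LinearIndependent ℝ (fun σ : {σ : Equiv.Perm (Fin (m+1)) // InTH σ} => permDiff σ.1) := by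
  classical
  haveI : Fintype {σ : Equiv.Perm (Fin (m+1)) // InTH σ} := Fintype.ofFinite _
  rw [Fintype.linearIndependent_iff]
  intro g hg
  have E : ∀ x y : Fin (m+1), x ≠ y →
      ∑ σ : {σ : Equiv.Perm (Fin (m+1)) // InTH σ}, g σ * (if x = σ.1 y then (1:ℝ) else 0) = 0 := by
    intro x y hxy
    have h1 := congrFun (congrFun hg x) y
    simp only [Matrix.sum_apply, Matrix.smul_apply, smul_eq_mul, Matrix.zero_apply] at h1
    have h2 : (∑ σ : {σ : Equiv.Perm (Fin (m+1)) // InTH σ}, g σ * (if x = σ.1 y then (1:ℝ) else 0))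
        = ∑ σ : {σ : Equiv.Perm (Fin (m+1)) // InTH σ}, g σ * permDiff σ.1 x y :=
      Finset.sum_congr rfl fun σ _ => by rw [pd_offdiag hxy]
    rw [h2]; exact h1
  have step1 : ∀ (x y : Fin (m+1)) (h0x : 0 < x) (hxy : x < y) (hσ : InTH (sw x y)),
      g ⟨sw x y, hσ⟩ = 0 := by
    intro x y h0x hxy hσ
    have hE := E x y hxy.ne
    rw [Finset.sum_eq_single_of_mem ⟨sw x y, hσ⟩ (Finset.mem_univ _)] at hE
    · rwa [Equiv.swap_apply_right, if_pos rfl, mul_one] at hE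
    · rintro ⟨σ', hσ'⟩ - hne
      by_cases hx : x = σ' y
      · exfalso
        rcases hσ' with ⟨i, j, hij, rfl⟩ | ⟨i, j, h0i, hij, rfl⟩
        · rcases (sw_eq_iff hxy.ne).1 hx with ⟨rfl, rfl⟩ | ⟨rfl, rfl⟩
          · exact hne (Subtype.ext rfl)
          · exact absurd hxy (lt_asymm hij)
        · rcases (cy_eq_iff h0i hij hxy.ne).1 hx with ⟨rfl, rfl⟩ | ⟨rfl, rfl⟩ | ⟨rfl, rfl⟩
          · exact absurd (h0x.trans hxy) (lt_irrefl _).elim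
          · exact absurd hxy (lt_asymm hij)
          · exact lt_irrefl _ h0x
      · rw [if_neg hx, mul_zero]
  have step2 : ∀ (x y : Fin (m+1)) (h0x : 0 < x) (hxy : x < y) (hσ : InTH (cy x y)),
      g ⟨cy x y, hσ⟩ = 0 := by
    intro x y h0x hxy hσ
    have hsw : InTH (sw x y) := Or.inl ⟨x, y, hxy, rfl⟩
    have hE := E y x hxy.ne'
    have hne : (⟨sw x y, hsw⟩ : {σ : Equiv.Perm (Fin (m+1)) // InTH σ}) ≠ ⟨cy x y, hσ⟩ :=
      fun h => sw_ne_cy h0x hxy (congrArg Subtype.val h)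
    rw [Finset.sum_eq_add_of_mem ⟨sw x y, hsw⟩ ⟨cy x y, hσ⟩ (Finset.mem_univ _)
        (Finset.mem_univ _) hne] at hE
    · have e1 : (sw x y) x = y := Equiv.swap_apply_left x y
      have e2 : (cy x y) x = y := by
        rw [cy_apply h0x hxy x, if_neg h0x.ne', if_pos rfl]
      rw [e1, if_pos rfl, e2, if_pos rfl, mul_one, mul_one,
        step1 x y h0x hxy hsw, zero_add] at hE
      exact hE
    · rintro ⟨σ', hσ'⟩ - ⟨hne1, hne2⟩
      by_cases hx : y = σ' x
      · exfalso
        rcases hσ' with ⟨i, j, hij, rfl⟩ | ⟨i, j, h0i, hij, rfl⟩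
        · rcases (sw_eq_iff hxy.ne').1 hx with ⟨rfl, rfl⟩ | ⟨rfl, rfl⟩
          · exact absurd hxy (lt_asymm hij)
          · exact hne1 (Subtype.ext rfl)
        · rcases (cy_eq_iff h0i hij hxy.ne').1 hx with ⟨rfl, rfl⟩ | ⟨rfl, rfl⟩ | ⟨rfl, rfl⟩
          · exact lt_irrefl _ h0x
          · exact hne2 (Subtype.ext rfl)
          · exact absurd (h0x.trans hxy) (lt_irrefl _).elim
      · rw [if_neg hx, mul_zero]
  have step3 : ∀ (y : Fin (m+1)) (h0y : 0 < y) (hσ : InTH (sw 0 y)),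
      g ⟨sw 0 y, hσ⟩ = 0 := by
    intro y h0y hσ
    have hE := E 0 y h0y.ne
    rw [Finset.sum_eq_single_of_mem ⟨sw 0 y, hσ⟩ (Finset.mem_univ _)] at hE
    · rwa [Equiv.swap_apply_right, if_pos rfl, mul_one] at hE
    · rintro ⟨σ', hσ'⟩ - hne
      by_cases hx : (0 : Fin (m+1)) = σ' y
      · rcases hσ' with ⟨i, j, hij, rfl⟩ | ⟨i, j, h0i, hij, rfl⟩
        · exfalso
          rcases (sw_eq_iff h0y.ne).1 hx with ⟨rfl, rfl⟩ | ⟨rfl, rfl⟩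
          · exact hne (Subtype.ext rfl)
          · exact absurd hij (Fin.not_lt_zero _).elim
        · rcases (cy_eq_iff h0i hij h0y.ne).1 hx with ⟨rfl, h'⟩ | ⟨rfl, h'⟩ | ⟨rfl, -⟩
          · exact absurd h0y (lt_irrefl _).elim
          · rw [← h'] at hij; exact absurd hij (Fin.not_lt_zero _)
          · exact mul_eq_zero_of_left (step2 i y h0i hij _) _
      · rw [if_neg hx, mul_zero]
  rintro ⟨σ, hσ⟩
  rcases hσ with ⟨i, j, hij, rfl⟩ | ⟨i, j, h0i, hij, rfl⟩
  · by_cases h0 : i = 0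
    · subst h0
      exact step3 j hij _
    · exact step1 i j (Fin.pos_iff_ne_zero.2 h0) hij _
  · exact step2 i j h0i hij _

variable (A : Matrix (Fin (m+1)) (Fin (m+1)) ℝ)

def hh : Fin (m+1) → Fin (m+1) → ℝ := fun i j => if 0 < i ∧ i < j then A j i - A i j else 0

def tt : Fin (m+1) → Fin (m+1) → ℝ := fun i j =>
  if 0 < i ∧ i < j then A i j else if i = 0 ∧ 0 < j then A 0 j - ∑ a, hh A a j else 0

lemma hh_nonsupp {i j : Fin (m+1)} (hc : ¬(0 < i ∧ i < j)) : hh A i j = 0 := if_neg hc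

lemma tt_nonsupp {i j : Fin (m+1)} (hc : ¬ i < j) : tt A i j = 0 := by
  unfold tt
  rw [if_neg, if_neg]
  · rintro ⟨rfl, h0j⟩; exact hc h0j
  · rintro ⟨-, hij⟩; exact hc hij

lemma key (hrow : ∀ x, ∑ y, A x y = 0) (hcol : ∀ y, ∑ x, A x y = 0)
    {x : Fin (m+1)} (h0x : 0 < x) :
    ∑ j, hh A x j - ∑ a, hh A a x = A x 0 - A 0 x := by
  have e : ∀ z, hh A x z - hh A z x
      = (A z x - A x z) - (if z = 0 then A 0 x - A x 0 else 0) := by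
    intro z
    by_cases hz0 : z = 0
    · subst hz0
      rw [hh_nonsupp A (by rintro ⟨-, hlt⟩; exact Fin.not_lt_zero _ hlt),
        hh_nonsupp A (by rintro ⟨hlt, -⟩; exact lt_irrefl _ hlt), if_pos rfl]
      ring
    · rw [if_neg hz0, sub_zero]
      rcases lt_trichotomy z x with hzx | rfl | hxz
      · rw [hh_nonsupp A (by rintro ⟨-, hlt⟩; exact lt_asymm hzx hlt)]
        unfold hh
        rw [if_pos ⟨Fin.pos_iff_ne_zero.2 hz0, hzx⟩]
        ring
      · simp
      · rw [hh_nonsupp A (i := z) (j := x) (by rintro ⟨-, hlt⟩; exact lt_asymm hxz hlt)]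
        unfold hh
        rw [if_pos ⟨h0x, hxz⟩]
        ring
  rw [← Finset.sum_sub_distrib]
  rw [Finset.sum_congr rfl fun z _ => e z]
  rw [Finset.sum_sub_distrib, Finset.sum_sub_distrib, hcol x, hrow x,
    Finset.sum_ite_eq' Finset.univ (0 : Fin (m+1)) (fun _ => A 0 x - A x 0),
    if_pos (Finset.mem_univ _)]
  ring


lemma collapse2 (c : ℝ) (x y : Fin (m+1)) :
    ∑ i, ∑ j, (if i = x ∧ j = y then c else 0) = c := by
  have e2 : ∀ i : Fin (m+1), ∑ j, (if i = x ∧ j = y then c else 0)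
      = if i = x then c else 0 := by
    intro i
    by_cases hix : i = x
    · simp [hix, Finset.sum_ite_eq']
    · simp [hix]
  rw [Finset.sum_congr rfl fun i _ => e2 i]
  simp [Finset.sum_ite_eq']

lemma S1 {x y : Fin (m+1)} (hxy : x ≠ y) :
    ∑ i, ∑ j, tt A i j * (if x = sw i j y then (1:ℝ) else 0) = tt A x y + tt A y x := by
  have e : ∀ i j, tt A i j * (if x = sw i j y then (1:ℝ) else 0)
      = (if i = x ∧ j = y then tt A x y else 0) + (if i = y ∧ j = x then tt A y x else 0) := by
    intro i j
    by_cases hx : x = sw i j y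
    · rw [if_pos hx, mul_one]
      rcases (sw_eq_iff hxy).1 hx with ⟨rfl, rfl⟩ | ⟨rfl, rfl⟩
      · rw [if_pos ⟨rfl, rfl⟩, if_neg (by rintro ⟨rfl, -⟩; exact hxy rfl), add_zero]
      · rw [if_neg (by rintro ⟨h, -⟩; exact hxy h.symm), if_pos ⟨rfl, rfl⟩, zero_add]
    · rw [if_neg hx, mul_zero, if_neg, if_neg, add_zero]
      · rintro ⟨rfl, rfl⟩; exact hx (Equiv.swap_apply_left i j).symm
      · rintro ⟨rfl, rfl⟩; exact hx (Equiv.swap_apply_right i j).symm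
  rw [Finset.sum_congr rfl fun i _ => Finset.sum_congr rfl fun j _ => e i j,
    Finset.sum_congr rfl fun i _ => Finset.sum_add_distrib, Finset.sum_add_distrib,
    collapse2 (tt A x y) x y, collapse2 (tt A y x) y x]

lemma S2C {x y : Fin (m+1)} (h0x : 0 < x) (hxy : x < y) :
    ∑ i, ∑ j, hh A i j * (if x = cy i j y then (1:ℝ) else 0) = 0 := by
  refine Finset.sum_eq_zero fun i _ => Finset.sum_eq_zero fun j _ => ?_
  by_cases hc : 0 < i ∧ i < j
  · by_cases hx : x = cy i j y
    · exfalso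
      rcases (cy_eq_iff hc.1 hc.2 hxy.ne).1 hx with ⟨rfl, rfl⟩ | ⟨rfl, rfl⟩ | ⟨rfl, rfl⟩
      · exact Fin.not_lt_zero _ (h0x.trans hxy)
      · exact lt_asymm hxy hc.2
      · exact lt_irrefl _ h0x
    · rw [if_neg hx, mul_zero]
  · rw [hh_nonsupp A hc, zero_mul]

lemma S2D {x y : Fin (m+1)} (h0y : 0 < y) (hyx : y < x) :
    ∑ i, ∑ j, hh A i j * (if x = cy i j y then (1:ℝ) else 0) = hh A y x := by
  have hxy : x ≠ y := hyx.ne'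
  have e : ∀ i j, hh A i j * (if x = cy i j y then (1:ℝ) else 0)
      = (if i = y ∧ j = x then hh A y x else 0) := by
    intro i j
    by_cases hc : 0 < i ∧ i < j
    · by_cases hx : x = cy i j y
      · rcases (cy_eq_iff hc.1 hc.2 hxy).1 hx with ⟨rfl, rfl⟩ | ⟨rfl, rfl⟩ | ⟨rfl, rfl⟩
        · exact absurd h0y (lt_irrefl _).elim
        · rw [if_pos hx, mul_one, if_pos ⟨rfl, rfl⟩]
        · exact absurd (h0y.trans hyx) (lt_irrefl _).elim
      · rw [if_neg hx, mul_zero, if_neg]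
        rintro ⟨rfl, rfl⟩
        exact hx (by rw [cy_apply hc.1 hc.2, if_neg hc.1.ne', if_pos rfl])
    · rw [hh_nonsupp A hc, zero_mul]
      split_ifs with hp
      · obtain ⟨rfl, rfl⟩ := hp
        exact (hh_nonsupp A hc).symm
      · rfl
  rw [Finset.sum_congr rfl fun i _ => Finset.sum_congr rfl fun j _ => e i j,
    collapse2 (hh A y x) y x]

lemma S2B {x : Fin (m+1)} (h0x : 0 < x) :
    ∑ i, ∑ j, hh A i j * (if x = cy i j 0 then (1:ℝ) else 0) = ∑ j, hh A x j := by
  have e : ∀ i j, hh A i j * (if x = cy i j 0 then (1:ℝ) else 0)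
      = (if i = x then hh A i j else 0) := by
    intro i j
    by_cases hc : 0 < i ∧ i < j
    · have h1 : cy i j 0 = i := by rw [cy_apply hc.1 hc.2, if_pos rfl]
      rw [h1]
      by_cases hix : i = x
      · rw [if_pos hix.symm, mul_one, if_pos hix]
      · rw [if_neg (fun h => hix h.symm), mul_zero, if_neg hix]
    · rw [hh_nonsupp A hc, zero_mul]
      split_ifs <;> simp [hh_nonsupp A hc]
  rw [Finset.sum_congr rfl fun i _ => Finset.sum_congr rfl fun j _ => e i j]
  have e2 : ∀ i : Fin (m+1), ∑ j, (if i = x then hh A i j else 0)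
      = if i = x then ∑ j, hh A i j else 0 := by
    intro i; split_ifs <;> simp
  rw [Finset.sum_congr rfl fun i _ => e2 i,
    Finset.sum_ite_eq' Finset.univ x (fun i => ∑ j, hh A i j), if_pos (Finset.mem_univ _)]

lemma S2A {y : Fin (m+1)} (h0y : 0 < y) :
    ∑ i, ∑ j, hh A i j * (if (0 : Fin (m+1)) = cy i j y then (1:ℝ) else 0) = ∑ a, hh A a y := by
  have e : ∀ i j, hh A i j * (if (0 : Fin (m+1)) = cy i j y then (1:ℝ) else 0)
      = (if j = y then hh A i j else 0) := by
    intro i j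
    by_cases hc : 0 < i ∧ i < j
    · by_cases hjy : j = y
      · subst hjy
        have h1 : (0 : Fin (m+1)) = cy i j j := by
          rw [cy_apply hc.1 hc.2, if_neg (hc.1.trans hc.2).ne', if_neg hc.2.ne', if_pos rfl]
        rw [if_pos h1, mul_one, if_pos rfl]
      · rw [if_neg, mul_zero, if_neg hjy]
        intro hx
        rcases (cy_eq_iff hc.1 hc.2 h0y.ne).1 hx with ⟨rfl, rfl⟩ | ⟨rfl, h'⟩ | ⟨rfl, -⟩
        · exact absurd h0y (lt_irrefl _).elim
        · exact absurd hc.2 (h' ▸ Fin.not_lt_zero _)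
        · exact hjy rfl
    · rw [hh_nonsupp A hc, zero_mul]
      split_ifs <;> simp [hh_nonsupp A hc]
  rw [Finset.sum_congr rfl fun i _ => Finset.sum_congr rfl fun j _ => e i j]
  exact Finset.sum_congr rfl fun i _ => by
    rw [Finset.sum_ite_eq' Finset.univ y (fun j => hh A i j), if_pos (Finset.mem_univ _)]


theorem span_half (m : ℕ) (A : Matrix (Fin (m+1)) (Fin (m+1)) ℝ)
    (hcol : ∀ y, ∑ x, A x y = 0) (hrow : ∀ x, ∑ y, A x y = 0) :
    A ∈ Submodule.span ℝ
      (Set.range fun σ : {σ : Equiv.Perm (Fin (m+1)) // InTH σ} => permDiff σ.1) := by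
  classical
  set M : Matrix (Fin (m+1)) (Fin (m+1)) ℝ :=
    (∑ i, ∑ j, tt A i j • permDiff (sw i j)) + ∑ i, ∑ j, hh A i j • permDiff (cy i j) with hMdef
  have hMentry : ∀ x y, M x y
      = (∑ i, ∑ j, tt A i j * permDiff (sw i j) x y)
        + ∑ i, ∑ j, hh A i j * permDiff (cy i j) x y := by
    intro x y
    simp [hMdef, Matrix.add_apply, Matrix.sum_apply, Matrix.smul_apply, smul_eq_mul]
  have hMrow : ∀ x, ∑ y, M x y = 0 := by
    intro x
    have aux : ∀ (c : Fin (m+1) → Fin (m+1) → ℝ)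
        (f : Fin (m+1) → Fin (m+1) → Equiv.Perm (Fin (m+1))),
        ∑ y, ∑ i, ∑ j, c i j * permDiff (f i j) x y = 0 := by
      intro c f
      rw [Finset.sum_comm]
      refine Finset.sum_eq_zero fun i _ => ?_
      rw [Finset.sum_comm]
      refine Finset.sum_eq_zero fun j _ => ?_
      rw [← Finset.mul_sum, pd_row, mul_zero]
    calc ∑ y, M x y = ∑ y, ((∑ i, ∑ j, tt A i j * permDiff (sw i j) x y)
          + ∑ i, ∑ j, hh A i j * permDiff (cy i j) x y) :=
        Finset.sum_congr rfl fun y _ => hMentry x y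
      _ = 0 := by rw [Finset.sum_add_distrib, aux, aux, add_zero]
  have hoff : ∀ x y, x ≠ y → M x y = A x y := by
    intro x y hxy
    have p1 : ∀ (c : Fin (m+1) → Fin (m+1) → ℝ)
        (f : Fin (m+1) → Fin (m+1) → Equiv.Perm (Fin (m+1))),
        ∑ i, ∑ j, c i j * permDiff (f i j) x y
          = ∑ i, ∑ j, c i j * (if x = f i j y then (1:ℝ) else 0) :=
      fun c f => Finset.sum_congr rfl fun i _ => Finset.sum_congr rfl fun j _ => by
        rw [pd_offdiag hxy]
    rw [hMentry, p1 (tt A) sw, p1 (hh A) cy]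
    by_cases hx0 : x = 0
    · subst hx0
      have h0y : 0 < y := Fin.pos_iff_ne_zero.2 (fun h => hxy h.symm)
      rw [S1 A hxy, S2A A h0y]
      have h1 : tt A 0 y = A 0 y - ∑ a, hh A a y := by
        unfold tt; rw [if_neg (by rintro ⟨h, -⟩; exact lt_irrefl _ h), if_pos ⟨rfl, h0y⟩]
      have h2 : tt A y 0 = 0 := tt_nonsupp A (Fin.not_lt_zero y)
      rw [h1, h2]; ring
    · have h0x : 0 < x := Fin.pos_iff_ne_zero.2 hx0
      by_cases hy0 : y = 0
      · subst hy0
        rw [S1 A hxy, S2B A h0x]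
        have h1 : tt A x 0 = 0 := tt_nonsupp A (Fin.not_lt_zero x)
        have h2 : tt A 0 x = A 0 x - ∑ a, hh A a x := by
          unfold tt; rw [if_neg (by rintro ⟨h, -⟩; exact lt_irrefl _ h), if_pos ⟨rfl, h0x⟩]
        rw [h1, h2]
        have h3 := key A hrow hcol h0x
        linarith
      · have h0y : 0 < y := Fin.pos_iff_ne_zero.2 hy0
        rcases lt_or_gt_of_ne hxy with hlt | hgt
        · rw [S1 A hxy, S2C A h0x hlt, add_zero]
          have h1 : tt A x y = A x y := by unfold tt; rw [if_pos ⟨h0x, hlt⟩]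
          have h2 : tt A y x = 0 := tt_nonsupp A (fun h => lt_asymm hlt h)
          rw [h1, h2, add_zero]
        · rw [S1 A hxy, S2D A h0y hgt]
          have h1 : tt A x y = 0 := tt_nonsupp A (fun h => lt_asymm hgt h)
          have h2 : tt A y x = A y x := by unfold tt; rw [if_pos ⟨h0y, hgt⟩]
          have h3 : hh A y x = A x y - A y x := by unfold hh; rw [if_pos ⟨h0y, hgt⟩]
          rw [h1, h2, h3]; ring
  have hAM : A = M := by
    ext x y
    by_cases hxy : x = y
    · subst hxy
      have h1 : A x x + ∑ y ∈ Finset.univ.erase x, A x y = 0 := by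
        rw [Finset.add_sum_erase _ _ (Finset.mem_univ x)]; exact hrow x
      have h2 : M x x + ∑ y ∈ Finset.univ.erase x, M x y = 0 := by
        rw [Finset.add_sum_erase _ _ (Finset.mem_univ x)]; exact hMrow x
      have h3 : ∑ y ∈ Finset.univ.erase x, M x y = ∑ y ∈ Finset.univ.erase x, A x y :=
        Finset.sum_congr rfl fun y hy =>
          hoff x y (Ne.symm (Finset.mem_erase.1 hy).1)
      linarith
    · exact (hoff x y hxy).symm
  rw [hAM, hMdef]
  refine Submodule.add_mem _ ?_ ?_
  · refine Submodule.sum_mem _ fun i _ => Submodule.sum_mem _ fun j _ => ?_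
    by_cases hij : i < j
    · exact Submodule.smul_mem _ _
        (Submodule.subset_span ⟨⟨sw i j, Or.inl ⟨i, j, hij, rfl⟩⟩, rfl⟩)
    · rw [tt_nonsupp A hij, zero_smul]; exact Submodule.zero_mem _
  · refine Submodule.sum_mem _ fun i _ => Submodule.sum_mem _ fun j _ => ?_
    by_cases hij : 0 < i ∧ i < j
    · exact Submodule.smul_mem _ _
        (Submodule.subset_span ⟨⟨cy i j, Or.inr ⟨i, j, hij.1, hij.2, rfl⟩⟩, rfl⟩)
    · rw [hh_nonsupp A hij, zero_smul]; exact Submodule.zero_mem _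



end PDAux

/-- the `m²` matrices `{ĝ_σ : σ ∈ T ∪ H}` are linearly independent
and span the space `B` of matrices with all row sums and column sums zero. -/
theorem permDiff_linearIndependent_span (m : ℕ) (hm : 1 ≤ m) :
    LinearIndependent ℝ
      (fun σ : {σ : Equiv.Perm (Fin (m + 1)) // InTH σ} => permDiff σ.1)
    ∧ ∀ A : Matrix (Fin (m + 1)) (Fin (m + 1)) ℝ,
        (∀ y, ∑ x, A x y = 0) → (∀ x, ∑ y, A x y = 0) →
        A ∈ Submodule.span ℝ
          (Set.range fun σ : {σ : Equiv.Perm (Fin (m + 1)) // InTH σ} => permDiff σ.1) :=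
  ⟨PDAux.indep m, fun A hcol hrow => PDAux.span_half m A hcol hrow⟩
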